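/- For all real numbers α, β and all natural numbers n ≥ 1 and m ≥ 1, (α·𝔏_α^[n] + β·𝔏_β^[n])^m = (−1)^(m−1)·(α+β)^(m−1)·(α·𝔏_α^[n] + β·𝔏_β^[n]). -/
import Mathlib


open Matrix


/-- The Markov generator `L_α = [[-1, 0], [1, 0]]`. -/
noncomputable def Lalpha : Matrix (Fin 2) (Fin 2) ℝ := !![-1, 0; 1, 0]

/-- The Markov generator `L_β = [[0, 1], [0, -1]]`. -/
noncomputable def Lbeta : Matrix (Fin 2) (Fin 2) ℝ := !![0, 1; 0, -1]

/-- `X^(A)`: the operator on the `n`-fold tensor power `(ℝ²)^⊗n` (indexed by functions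
`Fin n → Fin 2`) acting as `X` on the tensor factors in `A` and as the identity elsewhere:
`(X^(A))_{f,g} = (∏_{i ∈ A} X_{f(i),g(i)}) · (∏_{j ∉ A} [f(j) = g(j)])`. -/
noncomputable def opOn {n : ℕ} (X : Matrix (Fin 2) (Fin 2) ℝ) (A : Finset (Fin n)) :
    Matrix (Fin n → Fin 2) (Fin n → Fin 2) ℝ :=
  fun f g => (∏ i ∈ A, X (f i) (g i)) * ∏ j ∈ Aᶜ, (if f j = g j then (1 : ℝ) else 0)

/-- `𝔏_X^[n] := ∑_{∅ ≠ A ⊆ Fin n} X^(A)`. -/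
noncomputable def frakL (n : ℕ) (X : Matrix (Fin 2) (Fin 2) ℝ) :
    Matrix (Fin n → Fin 2) (Fin n → Fin 2) ℝ :=
  ∑ A ∈ Finset.univ.filter (fun A : Finset (Fin n) => A.Nonempty), opOn X A

noncomputable def tpow (n : ℕ) (K : Matrix (Fin 2) (Fin 2) ℝ) :
    Matrix (Fin n → Fin 2) (Fin n → Fin 2) ℝ :=
  fun f g => ∏ i, K (f i) (g i)

lemma tpow_mul (n : ℕ) (K K' : Matrix (Fin 2) (Fin 2) ℝ) :
    tpow n (K * K') = tpow n K * tpow n K' := by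
  ext f g
  simp only [tpow, Matrix.mul_apply, Finset.prod_univ_sum, ← Finset.prod_mul_distrib,
    Fintype.piFinset_univ]

lemma tpow_one (n : ℕ) : tpow n (1 : Matrix (Fin 2) (Fin 2) ℝ) = 1 := by
  ext f g
  simp only [tpow, Matrix.one_apply]
  by_cases h : f = g
  · subst h; simp
  · obtain ⟨i, hi⟩ := Function.ne_iff.mp h
    rw [if_neg h]
    exact Finset.prod_eq_zero (Finset.mem_univ i) (by simp [hi])

lemma opOn_empty (n : ℕ) (X : Matrix (Fin 2) (Fin 2) ℝ) :
    opOn X (∅ : Finset (Fin n)) = 1 := by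
  ext f g
  simp only [opOn, Finset.prod_empty, one_mul, Finset.compl_empty, Matrix.one_apply]
  by_cases h : f = g
  · subst h; simp
  · obtain ⟨i, hi⟩ := Function.ne_iff.mp h
    rw [if_neg h]
    exact Finset.prod_eq_zero (Finset.mem_univ i) (by simp [hi])

lemma frakL_eq (n : ℕ) (X : Matrix (Fin 2) (Fin 2) ℝ) :
    frakL n X = tpow n (X + 1) - 1 := by
  have h : tpow n (X + 1) = ∑ A ∈ (Finset.univ : Finset (Fin n)).powerset, opOn X A := by
    ext f g
    rw [Matrix.sum_apply]
    simp only [tpow, Matrix.add_apply, Finset.prod_add, opOn]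
    refine Finset.sum_congr rfl fun A hA => ?_
    rw [Finset.compl_eq_univ_sdiff]
    exact congrArg _ (Finset.prod_congr rfl fun j _ => by rw [Matrix.one_apply])
  have hsplit : (Finset.univ : Finset (Fin n)).powerset
      = insert ∅ (Finset.univ.filter (fun A : Finset (Fin n) => A.Nonempty)) := by
    ext A
    simp [Finset.nonempty_iff_ne_empty, or_comm, em]
  rw [frakL, eq_sub_iff_add_eq, h, hsplit, Finset.sum_insert (by simp), opOn_empty, add_comm]

lemma frakL_mul (n : ℕ) (X Y : Matrix (Fin 2) (Fin 2) ℝ)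
    (h : (X + 1) * (Y + 1) = X + 1) :
    frakL n X * frakL n Y = -frakL n Y := by
  rw [frakL_eq, frakL_eq, sub_mul, mul_sub, mul_sub, ← tpow_mul, h, one_mul, mul_one, mul_one]
  abel

lemma key_mul (x y : Matrix (Fin 2) (Fin 2) ℝ)
    (hx : x = Lalpha ∨ x = Lbeta) (hy : y = Lalpha ∨ y = Lbeta) (n : ℕ) :
    frakL n x * frakL n y = -frakL n y := by
  refine frakL_mul n x y ?_
  rcases hx with rfl | rfl <;> rcases hy with rfl | rfl <;>
    · simp only [Lalpha, Lbeta]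
      ext i j
      fin_cases i <;> fin_cases j <;>
        simp [Matrix.mul_apply, Fin.sum_univ_two, Matrix.one_apply]


/-- For all real `α, β` and all `n ≥ 1`, `m ≥ 1`:
`(α·𝔏_α^[n] + β·𝔏_β^[n])^m = (−1)^(m−1)·(α+β)^(m−1)·(α·𝔏_α^[n] + β·𝔏_β^[n])`. -/
theorem frakL_rate_power (α β : ℝ) (n m : ℕ) (hn : 1 ≤ n) (hm : 1 ≤ m) :
    (α • frakL n Lalpha + β • frakL n Lbeta) ^ m =
      ((-1 : ℝ) ^ (m - 1) * (α + β) ^ (m - 1)) •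
        (α • frakL n Lalpha + β • frakL n Lbeta) := by
  set M := α • frakL n Lalpha + β • frakL n Lbeta with hM
  have hsq : M * M = (-(α + β)) • M := by
    have haa := key_mul Lalpha Lalpha (Or.inl rfl) (Or.inl rfl) n
    have hab := key_mul Lalpha Lbeta (Or.inl rfl) (Or.inr rfl) n
    have hba := key_mul Lbeta Lalpha (Or.inr rfl) (Or.inl rfl) n
    have hbb := key_mul Lbeta Lbeta (Or.inr rfl) (Or.inr rfl) n
    rw [hM]
    rw [add_mul, mul_add, mul_add, smul_mul_assoc, smul_mul_assoc, smul_mul_assoc,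
      smul_mul_assoc, mul_smul_comm, mul_smul_comm, mul_smul_comm, mul_smul_comm,
      haa, hab, hba, hbb]
    rw [smul_add, smul_smul, smul_smul]
    module
  induction m with
  | zero => omega
  | succ k ih =>
    rcases Nat.eq_or_lt_of_le hm with h1 | h1
    · simp [← h1]
    · have hk : 1 ≤ k := Nat.lt_succ_iff.mp h1
      rw [pow_succ, ih hk, smul_mul_assoc, hsq, smul_smul]
      congr 1
      have : k + 1 - 1 = (k - 1) + 1 := by omega
      rw [this, pow_succ, pow_succ]
      ring
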